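/- arXiv:1404.2897 — 2 statements merged into one kernel-verified Lean document; each statement's English description precedes it below -/
import Mathlib

section
/- Let A = K(H) be the compact operators on a Hilbert space H. The left centralizers of the ideal F(H) of finite-rank operators correspond bijectively to (possibly unbounded) linear transformations t : H → H via T(v ⊗ w̄) = (tv) ⊗ w̄, where (v ⊗ w̄)u = ⟨u, w⟩ v. -/
set_option linter.unusedSectionVars false


open scoped ComplexOrder

noncomputable section

variable {H : Type*} [NormedAddCommGroup H] [InnerProductSpace ℂ H] [CompleteSpace H]

/-- The subspace `F(H)` of bounded finite-rank operators on `H`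
(the Pedersen ideal of the C*-algebra `K(H)` of compact operators). -/
def FR (H : Type*) [NormedAddCommGroup H] [InnerProductSpace ℂ H] :
    Submodule ℂ (H →L[ℂ] H) where
  carrier := {x | FiniteDimensional ℂ (LinearMap.range (x : H →ₗ[ℂ] H))}
  add_mem' := by
    intro a b ha hb
    simp only [Set.mem_setOf_eq] at *
    haveI := ha; haveI := hb
    haveI : FiniteDimensional ℂ
        ↥(LinearMap.range (a : H →ₗ[ℂ] H) ⊔ LinearMap.range (b : H →ₗ[ℂ] H)) :=
      Submodule.finiteDimensional_sup _ _
    exact Submodule.finiteDimensional_of_le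
      (show LinearMap.range ((a + b : H →L[ℂ] H) : H →ₗ[ℂ] H) ≤
          LinearMap.range (a : H →ₗ[ℂ] H) ⊔ LinearMap.range (b : H →ₗ[ℂ] H) by
        rintro x ⟨u, rfl⟩
        exact Submodule.mem_sup.2 ⟨a u, ⟨u, rfl⟩, b u, ⟨u, rfl⟩, by simp⟩)
  zero_mem' := by
    simp only [Set.mem_setOf_eq]
    exact Submodule.finiteDimensional_of_le (show _ ≤ (⊥ : Submodule ℂ H) by
      rintro x ⟨u, rfl⟩; simp)
  smul_mem' := by
    intro c a ha
    simp only [Set.mem_setOf_eq] at *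
    haveI := ha
    exact Submodule.finiteDimensional_of_le
      (show LinearMap.range ((c • a : H →L[ℂ] H) : H →ₗ[ℂ] H) ≤
          LinearMap.range (a : H →ₗ[ℂ] H) by
        rintro x ⟨u, rfl⟩
        exact ⟨c • u, by simp [map_smul]⟩)

/-- The rank-one operator `v ⊗ w̄ : u ↦ ⟨u, w⟩ v`. -/
noncomputable def rankOne (v w : H) : H →L[ℂ] H := (innerSL ℂ w).smulRight v

/-- `T` is a left centralizer of `F(H)`: it maps `F(H)` into `F(H)` and
`T(xy) = (Tx)y` for all `x, y ∈ F(H)`. -/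
def IsLeftCentralizer (T : FR H →ₗ[ℂ] (H →L[ℂ] H)) : Prop :=
  (∀ x : FR H, T x ∈ FR H) ∧
  ∀ (x y : FR H) (h : (x : H →L[ℂ] H) * (y : H →L[ℂ] H) ∈ FR H),
    T ⟨(x : H →L[ℂ] H) * (y : H →L[ℂ] H), h⟩ = T x * (y : H →L[ℂ] H)

lemma rankOne_apply (v w u : H) : rankOne v w u = (inner ℂ w u : ℂ) • v := rfl

lemma rankOne_mul (a b c d : H) :
    rankOne a b * rankOne c d = (inner ℂ b c : ℂ) • rankOne a d := by
  ext u
  simp [rankOne_apply, smul_smul, mul_comm]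

lemma rankOne_add_left (v v' w : H) :
    rankOne (v + v') w = rankOne v w + rankOne v' w := by
  ext u; simp [rankOne_apply]

lemma rankOne_smul_left (c : ℂ) (v w : H) :
    rankOne (c • v) w = c • rankOne v w := by
  ext u
  rw [ContinuousLinearMap.smul_apply, rankOne_apply, rankOne_apply, smul_comm]

lemma mul_rankOne (S : H →L[ℂ] H) (v w : H) :
    S * rankOne v w = rankOne (S v) w := by
  ext u; simp [rankOne_apply]

lemma rankOne_mem (v w : H) : rankOne v w ∈ FR H := by
  show FiniteDimensional ℂ _
  exact Submodule.finiteDimensional_of_le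
    (show LinearMap.range ((rankOne v w : H →L[ℂ] H) : H →ₗ[ℂ] H) ≤ ℂ ∙ v by
      rintro x ⟨u, rfl⟩
      exact Submodule.mem_span_singleton.2 ⟨inner ℂ w u, rfl⟩)

lemma mem_FR_iff (x : H →L[ℂ] H) :
    x ∈ FR H ↔ FiniteDimensional ℂ (LinearMap.range (x : H →ₗ[ℂ] H)) := Iff.rfl

lemma exists_sum_rankOne (x : H →L[ℂ] H) (hx : x ∈ FR H) :
    ∃ (n : ℕ) (v w : Fin n → H), x = ∑ i, rankOne (v i) (w i) := by
  haveI : FiniteDimensional ℂ (LinearMap.range (x : H →ₗ[ℂ] H)) := hx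
  set p := LinearMap.range (x : H →ₗ[ℂ] H)
  let b := stdOrthonormalBasis ℂ p
  refine ⟨Module.finrank ℂ p, fun i => (b i : H),
    fun i => ContinuousLinearMap.adjoint x (b i : H), ?_⟩
  ext u
  have hxu : x u ∈ p := ⟨u, rfl⟩
  have := b.sum_repr ⟨x u, hxu⟩
  have h2 : (x u : H) = ∑ i, (inner ℂ (b i : H) (x u) : ℂ) • (b i : H) := by
    conv_lhs => rw [show x u = ((⟨x u, hxu⟩ : p) : H) from rfl, ← this]
    push_cast
    simp [b.repr_apply_apply, Submodule.coe_inner]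
  rw [ContinuousLinearMap.sum_apply]
  simp only [rankOne_apply, ContinuousLinearMap.adjoint_inner_left]
  exact h2

/-- Continuity of `t ∘ x` for finite-rank `x`. -/
lemma cont_comp (t : H →ₗ[ℂ] H) (x : H →L[ℂ] H) (hx : x ∈ FR H) :
    Continuous (t ∘ₗ ((x : H →L[ℂ] H) : H →ₗ[ℂ] H)) := by
  haveI : FiniteDimensional ℂ (LinearMap.range (x : H →ₗ[ℂ] H)) := hx
  have h1 : Continuous fun u => ((x : H →ₗ[ℂ] H).rangeRestrict u) :=
    Continuous.subtype_mk x.continuous _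
  have h2 : Continuous (t ∘ₗ (LinearMap.range (x : H →ₗ[ℂ] H)).subtype) :=
    LinearMap.continuous_of_finiteDimensional _
  exact h2.comp h1

/-- The left centralizer associated to `t`. -/
noncomputable def mkT (t : H →ₗ[ℂ] H) : FR H →ₗ[ℂ] (H →L[ℂ] H) where
  toFun x := ⟨t ∘ₗ ((x : H →L[ℂ] H) : H →ₗ[ℂ] H), cont_comp t x x.2⟩
  map_add' x y := by ext u; simp
  map_smul' c x := by ext u; simp

lemma mkT_apply (t : H →ₗ[ℂ] H) (x : FR H) (u : H) :
    mkT t x u = t ((x : H →L[ℂ] H) u) := rfl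

lemma mkT_rankOne (t : H →ₗ[ℂ] H) (v w : H) (h : rankOne v w ∈ FR H) :
    mkT t ⟨rankOne v w, h⟩ = rankOne (t v) w := by
  ext u
  rw [mkT_apply, rankOne_apply, rankOne_apply, map_smul]

lemma mkT_centralizer (t : H →ₗ[ℂ] H) : IsLeftCentralizer (mkT t) := by
  constructor
  · intro x
    show FiniteDimensional ℂ _
    haveI : FiniteDimensional ℂ (LinearMap.range ((x : H →L[ℂ] H) : H →ₗ[ℂ] H)) := x.2
    have hle : LinearMap.range ((mkT t x : H →L[ℂ] H) : H →ₗ[ℂ] H) ≤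
        Submodule.map t (LinearMap.range ((x : H →L[ℂ] H) : H →ₗ[ℂ] H)) := by
      rintro y ⟨u, rfl⟩
      exact ⟨(x : H →L[ℂ] H) u, ⟨u, rfl⟩, rfl⟩
    haveI : FiniteDimensional ℂ
        (Submodule.map t (LinearMap.range ((x : H →L[ℂ] H) : H →ₗ[ℂ] H))) :=
      inferInstance
    exact Submodule.finiteDimensional_of_le hle
  · intro x y h
    ext u
    rfl

/-- Uniqueness of the centralizer given the rank-one data. -/
lemma centralizer_unique (t : H →ₗ[ℂ] H) (T : FR H →ₗ[ℂ] (H →L[ℂ] H))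
    (hT : ∀ (v w : H) (h : rankOne v w ∈ FR H), T ⟨rankOne v w, h⟩ = rankOne (t v) w) :
    T = mkT t := by
  apply LinearMap.ext
  intro x
  obtain ⟨n, v, w, hx⟩ := exists_sum_rankOne (x : H →L[ℂ] H) x.2
  have hxe : x = ∑ i, (⟨rankOne (v i) (w i), rankOne_mem _ _⟩ : FR H) := by
    apply Subtype.ext
    rw [hx]
    simp
  rw [hxe]
  rw [map_sum, map_sum]
  refine Finset.sum_congr rfl fun i _ => ?_
  rw [hT, mkT_rankOne]

/-- the left centralizers of `F(H)` correspond bijectively to (possibly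
unbounded) linear transformations `t : H → H`, via `T(v ⊗ w̄) = (tv) ⊗ w̄`. -/
theorem stmt_9 :
    (∀ T : FR H →ₗ[ℂ] (H →L[ℂ] H), IsLeftCentralizer T →
      ∃! t : H →ₗ[ℂ] H, ∀ (v w : H) (h : rankOne v w ∈ FR H),
        T ⟨rankOne v w, h⟩ = rankOne (t v) w) ∧
    (∀ t : H →ₗ[ℂ] H, ∃! T : FR H →ₗ[ℂ] (H →L[ℂ] H), IsLeftCentralizer T ∧
      ∀ (v w : H) (h : rankOne v w ∈ FR H), T ⟨rankOne v w, h⟩ = rankOne (t v) w) := by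
  constructor
  · intro T hT
    by_cases hH : ∀ v : H, v = 0
    · haveI : Subsingleton H := ⟨fun a b => (hH a).trans (hH b).symm⟩
      haveI : Subsingleton (H →L[ℂ] H) :=
        ⟨fun a b => ContinuousLinearMap.ext fun u => Subsingleton.elim _ _⟩
      refine ⟨0, fun v w h => Subsingleton.elim _ _, fun t' _ => ?_⟩
      exact LinearMap.ext fun v => Subsingleton.elim _ _
    · obtain ⟨v0, hv0⟩ := not_forall.mp hH
      set e : H := (‖v0‖ : ℂ)⁻¹ • v0 with he_def
      have hne : ‖e‖ = 1 := by
        rw [he_def, norm_smul]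
        simp [norm_ne_zero_iff.mpr hv0]
      have he : (inner ℂ e e : ℂ) = 1 := by
        rw [inner_self_eq_norm_sq_to_K, hne]
        norm_num
      set t0 : H → H := fun v => (T ⟨rankOne v e, rankOne_mem _ _⟩) e with ht0
      have hkey : ∀ (v w : H) (h : rankOne v w ∈ FR H),
          T ⟨rankOne v w, h⟩ = rankOne (t0 v) w := by
        intro v w h
        have hprod : rankOne v w = rankOne v e * rankOne e w := by
          rw [rankOne_mul, he, one_smul]
        have hmem' : (rankOne v e) * (rankOne e w) ∈ FR H := hprod ▸ h
        have heq : (⟨rankOne v w, h⟩ : FR H)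
            = ⟨(rankOne v e) * (rankOne e w), hmem'⟩ := Subtype.ext hprod
        rw [heq,
          hT.2 ⟨rankOne v e, rankOne_mem _ _⟩ ⟨rankOne e w, rankOne_mem _ _⟩ hmem',
          mul_rankOne]
      have hadd : ∀ v v' : H, t0 (v + v') = t0 v + t0 v' := by
        intro v v'
        have : (⟨rankOne (v + v') e, rankOne_mem _ _⟩ : FR H)
            = ⟨rankOne v e, rankOne_mem _ _⟩ + ⟨rankOne v' e, rankOne_mem _ _⟩ :=
          Subtype.ext (rankOne_add_left v v' e)
        rw [ht0]
        simp only [this, map_add, ContinuousLinearMap.add_apply]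
      have hsmul : ∀ (c : ℂ) (v : H), t0 (c • v) = c • t0 v := by
        intro c v
        have : (⟨rankOne (c • v) e, rankOne_mem _ _⟩ : FR H)
            = c • ⟨rankOne v e, rankOne_mem _ _⟩ :=
          Subtype.ext (rankOne_smul_left c v e)
        rw [ht0]
        simp only [this, map_smul, ContinuousLinearMap.smul_apply]
      refine ⟨⟨⟨t0, hadd⟩, hsmul⟩, hkey, fun t' ht' => ?_⟩
      apply LinearMap.ext
      intro v
      have h1 := ht' v e (rankOne_mem _ _)
      have h2 := hkey v e (rankOne_mem _ _)
      have h3 : rankOne (t' v) e = rankOne (t0 v) e := h1.symm.trans h2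
      have h4 := congrArg (fun S : H →L[ℂ] H => S e) h3
      simpa [rankOne_apply, he, hne] using h4
  · intro t
    exact ⟨mkT t, ⟨mkT_centralizer t, mkT_rankOne t⟩,
      fun T' hT' => centralizer_unique t T' hT'.2⟩
end
end

section
/- Let H be an infinite-dimensional Hilbert space. Then there exists an unbounded left centralizer of F(H), the finite-rank operators on H; hence not every left centralizer of the Pedersen ideal of K(H) is bounded. -/
open scoped ComplexOrder

noncomputable section

variable {H : Type*} [NormedAddCommGroup H] [InnerProductSpace ℂ H] [CompleteSpace H]

/-- An unbounded linear functional on an infinite-dimensional space. -/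
lemma exists_unbounded_functional (hH : ¬ FiniteDimensional ℂ H) :
    ∃ f : H →ₗ[ℂ] ℂ, ∀ C : ℝ, ∃ w : H, w ≠ 0 ∧ C * ‖w‖ < ‖f w‖ := by
  set b := Module.Basis.ofVectorSpace ℂ H
  haveI : Infinite (Module.Basis.ofVectorSpaceIndex ℂ H) := by
    by_contra hfin
    rw [not_infinite_iff_finite] at hfin
    haveI := hfin
    haveI := Fintype.ofFinite (Module.Basis.ofVectorSpaceIndex ℂ H)
    exact hH (Module.Finite.of_basis b)
  set g := Infinite.natEmbedding (Module.Basis.ofVectorSpaceIndex ℂ H)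
  set vals : Module.Basis.ofVectorSpaceIndex ℂ H → ℂ :=
    Function.extend g (fun n => ((n + 1 : ℝ) * ‖b (g n)‖ : ℂ)) 0
  refine ⟨b.constr ℂ vals, fun C => ?_⟩
  obtain ⟨n, hn⟩ := exists_nat_gt C
  refine ⟨b (g n), b.ne_zero _, ?_⟩
  have h1 : (b.constr ℂ vals) (b (g n)) = vals (g n) := b.constr_basis ℂ vals (g n)
  have h2 : vals (g n) = ((n + 1 : ℝ) * ‖b (g n)‖ : ℂ) :=
    g.injective.extend_apply _ _ n
  rw [h1, h2]
  have hb : 0 < ‖b (g n)‖ := norm_pos_iff.2 (b.ne_zero _)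
  push_cast
  rw [show ((n : ℂ) + 1) * (‖b (g n)‖ : ℂ) = (((n : ℝ) + 1) * ‖b (g n)‖ : ℝ) by push_cast; ring,
    Complex.norm_real, Real.norm_of_nonneg (by positivity)]
  nlinarith

/-- `u ↦ f (x u) • v` as a linear map. -/
def auxLM (f : H →ₗ[ℂ] ℂ) (v : H) (x : H →L[ℂ] H) : H →ₗ[ℂ] H where
  toFun u := f (x u) • v
  map_add' u w := by simp [add_smul]
  map_smul' c u := by simp [smul_smul]

lemma auxLM_cont (f : H →ₗ[ℂ] ℂ) (v : H) (x : H →L[ℂ] H)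
    (hx : FiniteDimensional ℂ (LinearMap.range (x : H →ₗ[ℂ] H))) :
    Continuous (auxLM f v x) := by
  haveI := hx
  set R := LinearMap.range (x : H →ₗ[ℂ] H)
  have hfr : Continuous (f.comp R.subtype) := (f.comp R.subtype).continuous_of_finiteDimensional
  have hsub : Continuous fun u : H => (⟨x u, LinearMap.mem_range_self _ u⟩ : R) :=
    Continuous.subtype_mk x.continuous _
  have : Continuous fun u : H => f (x u) := hfr.comp hsub
  exact this.smul continuous_const

/-- The left centralizer `x ↦ (u ↦ f (x u) • v)`. -/
noncomputable def TT (f : H →ₗ[ℂ] ℂ) (v : H) : FR H →ₗ[ℂ] (H →L[ℂ] H) where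
  toFun x := ⟨auxLM f v (x : H →L[ℂ] H), auxLM_cont f v _ x.2⟩
  map_add' x y := by ext u; simp [auxLM]; module
  map_smul' c x := by ext u; simp [auxLM, smul_smul]

/-- if `H` is infinite dimensional then there is an unbounded left
centralizer of `F(H)`; hence not every left centralizer of the Pedersen ideal of
`K(H)` is bounded. -/
theorem stmt_11 (hH : ¬ FiniteDimensional ℂ H) :
    ∃ T : FR H →ₗ[ℂ] (H →L[ℂ] H), IsLeftCentralizer T ∧
      ¬ ∃ C : ℝ, ∀ x : FR H, ‖T x‖ ≤ C * ‖x‖ := by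
  haveI : Nontrivial H := by
    by_contra h
    rw [not_nontrivial_iff_subsingleton] at h
    haveI := h; exact hH (Module.finite_of_rank_eq_zero (by simp [rank_subsingleton']))
  obtain ⟨w0, hw0⟩ := exists_ne (0 : H)
  set v : H := ‖w0‖⁻¹ • w0 with hv_def
  have hv : ‖v‖ = 1 := by
    rw [hv_def, norm_smul, norm_inv, norm_norm, inv_mul_cancel₀ (norm_ne_zero_iff.2 hw0)]
  obtain ⟨f, hf⟩ := exists_unbounded_functional hH
  refine ⟨TT f v, ⟨?_, ?_⟩, ?_⟩
  · intro x
    show FiniteDimensional ℂ _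
    refine Submodule.finiteDimensional_of_le (S₂ := ℂ ∙ v) ?_
    rintro u ⟨z, rfl⟩
    exact Submodule.smul_mem _ _ (Submodule.mem_span_singleton_self v)
  · intro x y h
    ext u
    rfl
  · rintro ⟨C, hC⟩
    obtain ⟨w, hw0', hfw⟩ := hf (max C 0)
    have hwpos : 0 < ‖w‖ := norm_pos_iff.2 hw0'
    have hmem : rankOne w w ∈ FR H := by
      show FiniteDimensional ℂ _
      refine Submodule.finiteDimensional_of_le (S₂ := ℂ ∙ w) ?_
      rintro u ⟨z, rfl⟩
      exact Submodule.smul_mem _ _ (Submodule.mem_span_singleton_self w)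
    set x : FR H := ⟨rankOne w w, hmem⟩ with hx_def
    have hxnorm : ‖(x : H →L[ℂ] H)‖ ≤ ‖w‖ ^ 2 := by
      rw [hx_def]
      show ‖(innerSL ℂ w).smulRight w‖ ≤ ‖w‖ ^ 2
      rw [ContinuousLinearMap.norm_smulRight_apply, innerSL_apply_norm]
      nlinarith
    have happly : (TT f v x) w = ((inner ℂ w w : ℂ) * f w) • v := by
      show f ((rankOne w w) w) • v = _
      simp [rankOne, map_smul, smul_smul]
    have hnormapply : ‖(TT f v x) w‖ = ‖w‖ ^ 2 * ‖f w‖ := by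
      rw [happly, norm_smul, norm_mul, hv, mul_one,
        ← inner_self_re_eq_norm (𝕜 := ℂ), inner_self_eq_norm_sq]
    have h1 : ‖(TT f v x) w‖ ≤ ‖TT f v x‖ * ‖w‖ := (TT f v x).le_opNorm w
    have h2 : ‖TT f v x‖ ≤ C * ‖x‖ := hC x
    have h3 : ‖x‖ = ‖(x : H →L[ℂ] H)‖ := rfl
    have hCle : C ≤ max C 0 := le_max_left _ _
    have hmax0 : (0 : ℝ) ≤ max C 0 := le_max_right _ _
    have hTnn : (0:ℝ) ≤ ‖TT f v x‖ := norm_nonneg _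
    have hxnn : (0:ℝ) ≤ ‖x‖ := norm_nonneg _
    have hkey : max C 0 * ‖w‖ < ‖f w‖ := hfw
    have hx3 : ‖x‖ ≤ ‖w‖ ^ 2 := h3 ▸ hxnorm
    have final : ‖w‖ ^ 2 * ‖f w‖ < ‖w‖ ^ 2 * ‖f w‖ := by
      calc ‖w‖ ^ 2 * ‖f w‖ = ‖(TT f v x) w‖ := hnormapply.symm
        _ ≤ ‖TT f v x‖ * ‖w‖ := h1
        _ ≤ (C * ‖x‖) * ‖w‖ := mul_le_mul_of_nonneg_right h2 hwpos.le
        _ ≤ ((max C 0) * ‖x‖) * ‖w‖ :=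
            mul_le_mul_of_nonneg_right (mul_le_mul_of_nonneg_right hCle hxnn) hwpos.le
        _ ≤ ((max C 0) * ‖w‖ ^ 2) * ‖w‖ :=
            mul_le_mul_of_nonneg_right (mul_le_mul_of_nonneg_left hx3 hmax0) hwpos.le
        _ = ((max C 0) * ‖w‖) * ‖w‖ ^ 2 := by ring
        _ < ‖f w‖ * ‖w‖ ^ 2 := mul_lt_mul_of_pos_right hkey (by positivity)
        _ = ‖w‖ ^ 2 * ‖f w‖ := by ring
    exact lt_irrefl _ final
end
end
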